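/- arXiv:1109.0789 — 3 statements merged into one kernel-verified Lean document; each statement's English description precedes it below -/
import Mathlib

section
/- Let s ∈ ℝ, p ∈ (0,∞), q ∈ (p,∞), τ ∈ (0, 1/p - 1/q], and let t = {t_Q} be the sequence with t_{R_j} = |R_j|^{s/n+1/2+τ-1/p} for the cubes R_j = [0,2^{-j})^n, j ∈ ℤ, and t_Q = 0 otherwise. Then for every dyadic cube P one has |P|^{-τ} ( ∫_P ( Σ_{Q⊂P} [|Q|^{-s/n-1/2} |t_Q| χ_Q(x)]^q )^{p/q} dx )^{1/p} ≤ |P|^{-τ}( Σ_{j ≥ j_P} |R_j|^{(τ-1/p)p} |R_j| )^{1/p} ≤ C(n,p,τ) < ∞; hence ‖t‖_{ḟ^{s,τ}_{p,q}} ≤ C(n,p,τ). (The supremum over P reduces to P = R_k, k ∈ ℤ, since nonzero entries only occur at cubes R_j.) -/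
open MeasureTheory ENNReal

/-- A dyadic cube `Q_{jk} = 2^{-j}([0,1)^n + k)` in `ℝⁿ`, recorded by its
generation `j ∈ ℤ` and position `k ∈ ℤⁿ`. -/
structure DyadicCube (n : ℕ) where
  j : ℤ
  k : Fin n → ℤ

namespace DyadicCube

/-- The dyadic cube as a subset of `ℝⁿ`. -/
def toSet {n : ℕ} (Q : DyadicCube n) : Set (Fin n → ℝ) :=
  {x | ∀ i, (Q.k i : ℝ) * (2 : ℝ) ^ (-Q.j) ≤ x i ∧
        x i < ((Q.k i : ℝ) + 1) * (2 : ℝ) ^ (-Q.j)}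

/-- The Lebesgue measure `|Q| = 2^{-jn}` of a dyadic cube, as an element of `ℝ≥0∞`. -/
noncomputable def vol {n : ℕ} (Q : DyadicCube n) : ℝ≥0∞ :=
  (2 : ℝ≥0∞) ^ (-(Q.j : ℝ) * n)

/-- The characteristic function `χ_Q`, with values in `ℝ≥0∞`. -/
noncomputable def ind {n : ℕ} (Q : DyadicCube n) (x : Fin n → ℝ) : ℝ≥0∞ :=
  Q.toSet.indicator (fun _ => (1 : ℝ≥0∞)) x

end DyadicCube

open DyadicCube

/-- The coefficient `|Q|^{-s/n - 1/2}`. -/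
noncomputable def coeff {n : ℕ} (s : ℝ) (Q : DyadicCube n) : ℝ≥0∞ :=
  Q.vol ^ (-(s / (n : ℝ)) - 1 / 2)

/-- The `ℓ^q`-norm `(Σ_i a_i^q)^{1/q}` of a family of extended nonnegative reals,
with the usual modification (`sup`) when `q = ∞`. -/
noncomputable def lqSum {ι : Type*} (q : ℝ≥0∞) (a : ι → ℝ≥0∞) : ℝ≥0∞ :=
  if q = ∞ then ⨆ i, a i else (∑' i, a i ^ q.toReal) ^ (1 / q.toReal)

/-- The `L^p`-norm `(∫_A g^p dx)^{1/p}` over a set `A ⊆ ℝⁿ`, with the usual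
modification (`sup` over `x ∈ A`) when `p = ∞`. -/
noncomputable def lpIntOn {n : ℕ} (p : ℝ≥0∞) (A : Set (Fin n → ℝ))
    (g : (Fin n → ℝ) → ℝ≥0∞) : ℝ≥0∞ :=
  if p = ∞ then ⨆ x ∈ A, g x
  else (∫⁻ x in A, g x ^ p.toReal) ^ (1 / p.toReal)

/-- The Triebel–Lizorkin-type sequence norm
`‖t‖_{ḟ^{s,τ}_{p,q}} = sup_P |P|^{-τ} ( ∫_P ( Σ_{Q ⊆ P} [|Q|^{-s/n-1/2} |t_Q| χ_Q(x)]^q )^{p/q} dx )^{1/p}`,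
with the usual modifications when `p = ∞` or `q = ∞`. -/
noncomputable def fNorm (n : ℕ) (s τ : ℝ) (p q : ℝ≥0∞) (t : DyadicCube n → ℂ) : ℝ≥0∞ :=
  ⨆ P : DyadicCube n, P.vol ^ (-τ) *
    lpIntOn p P.toSet fun x =>
      lqSum q fun Q : {Q : DyadicCube n // Q.toSet ⊆ P.toSet} =>
        coeff s Q.1 * ‖t Q.1‖₊ * ind Q.1 x

/-- The Besov-type sequence norm
`‖t‖_{ḃ^{s,τ}_{p,q}} = sup_P |P|^{-τ} ( Σ_{j ≥ j_P} ( ∫_P [ Σ_{Q ⊆ P, ℓ(Q)=2^{-j}} |Q|^{-s/n-1/2} |t_Q| χ_Q(x) ]^p dx )^{q/p} )^{1/q}`,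
with the usual modifications when `p = ∞` or `q = ∞`. -/
noncomputable def bNorm (n : ℕ) (s τ : ℝ) (p q : ℝ≥0∞) (t : DyadicCube n → ℂ) : ℝ≥0∞ :=
  ⨆ P : DyadicCube n, P.vol ^ (-τ) *
    lqSum q fun j : {j : ℤ // P.j ≤ j} =>
      lpIntOn p P.toSet fun x =>
        ∑' Q : {Q : DyadicCube n // Q.toSet ⊆ P.toSet ∧ Q.j = j.1},
          coeff s Q.1 * ‖t Q.1‖₊ * ind Q.1 x

/-- The `ḟ^{σ}_{∞,∞} = ḃ^{σ}_{∞,∞}` sequence norm `sup_Q |Q|^{-σ/n - 1/2} |t_Q|`. -/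
noncomputable def supNorm (n : ℕ) (σ : ℝ) (t : DyadicCube n → ℂ) : ℝ≥0∞ :=
  ⨆ Q : DyadicCube n, coeff σ Q * ‖t Q‖₊

/-- The test sequence with `t_{R_j} = |R_j|^{s/n + 1/2 + τ - 1/p}` for
`R_j = [0,2^{-j})^n` (the dyadic cube with `k = 0`), and `t_Q = 0` otherwise. -/
noncomputable def testSeq (n : ℕ) (s τ p : ℝ) : DyadicCube n → ℂ := fun Q =>
  if Q.k = 0 then
    ((((2 : ℝ) ^ (-(Q.j : ℝ) * n)) ^ (s / n + 1 / 2 + τ - 1 / p) : ℝ) : ℂ)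
  else 0

/-- The cube `R_j = [0, 2^{-j})^n`. -/
def Rcube (n : ℕ) (j : ℤ) : DyadicCube n := ⟨j, 0⟩

-- helpers
lemma two_rpow_ne_zero (x : ℝ) : (2 : ℝ≥0∞) ^ x ≠ 0 := by
  simp [ENNReal.rpow_eq_zero_iff]

lemma two_rpow_ne_top (x : ℝ) : (2 : ℝ≥0∞) ^ x ≠ ∞ := by
  simp [ENNReal.rpow_eq_top_iff]

lemma vol_ne_zero {n : ℕ} (Q : DyadicCube n) : Q.vol ≠ 0 := two_rpow_ne_zero _
lemma vol_ne_top {n : ℕ} (Q : DyadicCube n) : Q.vol ≠ ∞ := two_rpow_ne_top _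

lemma vol_rpow_add {n : ℕ} (Q : DyadicCube n) (a b : ℝ) :
    Q.vol ^ a * Q.vol ^ b = Q.vol ^ (a + b) :=
  (ENNReal.rpow_add a b (vol_ne_zero Q) (vol_ne_top Q)).symm

lemma toSet_eq {n : ℕ} (Q : DyadicCube n) :
    Q.toSet = Set.pi Set.univ (fun i => Set.Ico ((Q.k i : ℝ) * (2:ℝ) ^ (-Q.j))
      (((Q.k i : ℝ) + 1) * (2:ℝ) ^ (-Q.j))) := by
  ext x; simp [toSet, Set.mem_pi, Set.mem_Ico]

lemma measurableSet_toSet {n : ℕ} (Q : DyadicCube n) : MeasurableSet Q.toSet := by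
  rw [toSet_eq]; exact MeasurableSet.univ_pi fun i => measurableSet_Ico

lemma ofReal_two_zpow (j : ℤ) :
    ENNReal.ofReal ((2:ℝ) ^ (-j)) = (2 : ℝ≥0∞) ^ (-(j:ℝ)) := by
  rw [show ((2:ℝ) ^ (-j)) = (2:ℝ) ^ ((-j : ℤ) : ℝ) from (Real.rpow_intCast 2 (-j)).symm,
    ← ENNReal.ofReal_rpow_of_pos two_pos]
  norm_num

lemma volume_toSet {n : ℕ} (Q : DyadicCube n) : volume Q.toSet = Q.vol := by
  rw [toSet_eq, volume_pi_pi]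
  have h : ∀ i : Fin n, volume (Set.Ico ((Q.k i : ℝ) * (2:ℝ) ^ (-Q.j))
      (((Q.k i : ℝ) + 1) * (2:ℝ) ^ (-Q.j))) = ENNReal.ofReal ((2:ℝ) ^ (-Q.j)) := by
    intro i
    rw [Real.volume_Ico]
    ring_nf
  simp_rw [h, Finset.prod_const, Finset.card_univ, Fintype.card_fin, ofReal_two_zpow]
  rw [vol, ENNReal.rpow_mul_natCast]

lemma zero_mem_toSet {n : ℕ} {Q : DyadicCube n} (h : Q.k = 0) : (0 : Fin n → ℝ) ∈ Q.toSet := by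
  intro i
  simp only [h, Pi.zero_apply, Int.cast_zero, zero_mul, zero_add, one_mul, le_refl, true_and]
  positivity

lemma k_eq_zero_of_zero_mem {n : ℕ} {P : DyadicCube n} (h : (0 : Fin n → ℝ) ∈ P.toSet) :
    P.k = 0 := by
  funext i
  obtain ⟨h1, h2⟩ := h i
  simp only [Pi.zero_apply] at h1 h2
  have hpow : (0:ℝ) < (2:ℝ) ^ (-P.j) := by positivity
  have hk1 : (P.k i : ℝ) ≤ 0 := by nlinarith
  have hk2 : (0:ℝ) < (P.k i : ℝ) + 1 := by nlinarith
  have hk1' : P.k i ≤ 0 := by exact_mod_cast hk1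
  have hk2' : (0:ℤ) < P.k i + 1 := by exact_mod_cast hk2
  simp only [Pi.zero_apply]
  omega

lemma Rsub {n : ℕ} {P Q : DyadicCube n} (hk : Q.k = 0) (hPk : P.k = 0) (hj : P.j ≤ Q.j) :
    Q.toSet ⊆ P.toSet := by
  intro x hx i
  obtain ⟨h1, h2⟩ := hx i
  simp only [hk, Pi.zero_apply, Int.cast_zero, zero_mul, zero_add, one_mul] at h1 h2
  have hle : (2:ℝ) ^ (-Q.j) ≤ (2:ℝ) ^ (-P.j) :=
    zpow_le_zpow_right₀ one_le_two (neg_le_neg hj)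
  simp only [hPk, Pi.zero_apply, Int.cast_zero, zero_mul, zero_add, one_mul]
  exact ⟨h1, lt_of_lt_of_le h2 hle⟩

lemma j_le_of_subset {n : ℕ} (hn : 0 < n) {P Q : DyadicCube n}
    (hsub : Q.toSet ⊆ P.toSet) (hk : Q.k = 0) (hPk : P.k = 0) : P.j ≤ Q.j := by
  by_contra hlt
  push_neg at hlt
  set x : Fin n → ℝ := fun _ => (2:ℝ) ^ (-P.j) with hxdef
  have hxQ : x ∈ Q.toSet := by
    intro i
    simp only [hk, Pi.zero_apply, Int.cast_zero, zero_mul, zero_add, one_mul, hxdef]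
    constructor
    · positivity
    · exact zpow_lt_zpow_right₀ one_lt_two (by omega)
  have hxP := hsub hxQ ⟨0, hn⟩
  simp only [hPk, Pi.zero_apply, Int.cast_zero, zero_mul, zero_add, one_mul, hxdef] at hxP
  exact lt_irrefl _ hxP.2

lemma tsum_rpow_le {ι : Type*} (a : ι → ℝ≥0∞) {r : ℝ} (h0 : 0 < r) (h1 : r ≤ 1) :
    (∑' i, a i) ^ r ≤ ∑' i, a i ^ r := by
  rw [← ENNReal.le_rpow_inv_iff h0]
  rw [ENNReal.tsum_eq_iSup_sum]
  refine iSup_le fun F => ?_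
  rw [ENNReal.le_rpow_inv_iff h0]
  calc (∑ i ∈ F, a i) ^ r ≤ ∑ i ∈ F, a i ^ r := by
        classical
        induction F using Finset.induction with
        | empty => simp [ENNReal.zero_rpow_of_pos h0]
        | insert _ _ hi ih =>
          rw [Finset.sum_insert hi, Finset.sum_insert hi]
          exact (ENNReal.rpow_add_le_add_rpow _ _ h0.le h1).trans (add_le_add_right ih _)
    _ ≤ ∑' i, a i ^ r := ENNReal.sum_le_tsum F

def shiftEquiv' (m : ℤ) : ℕ ≃ {j : ℤ // m ≤ j} where
  toFun i := ⟨m + i, le_add_of_nonneg_right (Int.ofNat_nonneg i)⟩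
  invFun j := (j.1 - m).toNat
  left_inv i := by simp
  right_inv j := Subtype.ext (by simp [Int.toNat_of_nonneg (sub_nonneg.2 j.2)])

lemma geom_sum (m : ℤ) {c : ℝ} (hc : 0 < c) :
    ∑' j : {j : ℤ // m ≤ j}, (2:ℝ≥0∞) ^ (-(j.1 : ℝ) * c) =
      (2:ℝ≥0∞) ^ (-(m : ℝ) * c) * (1 - (2:ℝ≥0∞) ^ (-c))⁻¹ := by
  rw [← (shiftEquiv' m).tsum_eq]
  have hterm : ∀ i : ℕ, (2:ℝ≥0∞) ^ (-(((shiftEquiv' m) i).1 : ℝ) * c) =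
      (2:ℝ≥0∞) ^ (-(m:ℝ) * c) * ((2:ℝ≥0∞) ^ (-c)) ^ i := by
    intro i
    have h1 : (((shiftEquiv' m) i).1 : ℝ) = (m : ℝ) + (i : ℕ) := by
      simp [shiftEquiv']
    have h2 : -(((shiftEquiv' m) i).1 : ℝ) * c = (-(m:ℝ) * c) + (-c) * (i:ℕ) := by
      rw [h1]; ring
    rw [h2, ENNReal.rpow_add _ _ (by norm_num) (by norm_num), ENNReal.rpow_mul_natCast]
  simp_rw [hterm]
  rw [ENNReal.tsum_mul_left, ENNReal.tsum_geometric]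


instance {n : ℕ} : Countable (DyadicCube n) :=
  Function.Injective.countable (f := fun Q : DyadicCube n => (Q.j, Q.k))
    (fun Q Q' h => by cases Q; cases Q'; simpa using h)

lemma coeff_mul_norm {n : ℕ} (s τ p : ℝ) (Q : DyadicCube n) (hk : Q.k = 0) :
    coeff s Q * (‖testSeq n s τ p Q‖₊ : ℝ≥0∞) = Q.vol ^ (τ - 1/p) := by
  have hx : (0:ℝ) < (2:ℝ) ^ (-(Q.j : ℝ) * n) := Real.rpow_pos_of_pos two_pos _
  have hr : (0:ℝ) < ((2:ℝ) ^ (-(Q.j : ℝ) * n)) ^ (s / n + 1 / 2 + τ - 1 / p) :=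
    Real.rpow_pos_of_pos hx _
  have hnorm : (‖testSeq n s τ p Q‖₊ : ℝ≥0∞) = Q.vol ^ (s / n + 1 / 2 + τ - 1 / p) := by
    rw [testSeq, if_pos hk, Complex.nnnorm_real, ← enorm_eq_nnnorm, Real.enorm_eq_ofReal hr.le,
      ← ENNReal.ofReal_rpow_of_pos hx, ← ENNReal.ofReal_rpow_of_pos two_pos]
    norm_num [vol]
  rw [coeff, hnorm, vol_rpow_add]
  congr 1
  ring

lemma zero_norm {n : ℕ} (s τ p : ℝ) (Q : DyadicCube n) (hk : Q.k ≠ 0) :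
    (‖testSeq n s τ p Q‖₊ : ℝ≥0∞) = 0 := by
  rw [testSeq, if_neg hk]; simp

/-- for `s ∈ ℝ`, `p ∈ (0,∞)`, `q ∈ (p,∞)`, `τ ∈ (0, 1/p - 1/q]` and the
test sequence `t` (with `t_{R_j} = |R_j|^{s/n+1/2+τ-1/p}`, zero otherwise), there is a
finite constant `C = C(n,p,τ)` such that for every dyadic cube `P` the local
Triebel–Lizorkin-type quantity is at most
`|P|^{-τ} ( Σ_{j ≥ j_P} |R_j|^{(τ-1/p)p} |R_j| )^{1/p} ≤ C`; hence
`‖t‖_{ḟ^{s,τ}_{p,q}} ≤ C`. -/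
theorem stmt12 (n : ℕ) (hn : 0 < n) (s p q τ : ℝ)
    (hp : 0 < p) (hpq : p < q) (hτ : 0 < τ) (hτ' : τ ≤ 1 / p - 1 / q) :
    ∃ C : ℝ≥0∞, C ≠ ∞ ∧
      (∀ P : DyadicCube n,
        (P.vol ^ (-τ) *
            lpIntOn (ENNReal.ofReal p) P.toSet fun x =>
              lqSum (ENNReal.ofReal q)
                fun Q : {Q : DyadicCube n // Q.toSet ⊆ P.toSet} =>
                  coeff s Q.1 * ‖testSeq n s τ p Q.1‖₊ * ind Q.1 x) ≤
          P.vol ^ (-τ) *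
            (∑' j : {j : ℤ // P.j ≤ j},
              (Rcube n j.1).vol ^ ((τ - 1 / p) * p) * (Rcube n j.1).vol) ^ (1 / p) ∧
        P.vol ^ (-τ) *
            (∑' j : {j : ℤ // P.j ≤ j},
              (Rcube n j.1).vol ^ ((τ - 1 / p) * p) * (Rcube n j.1).vol) ^ (1 / p) ≤ C) ∧
      fNorm n s τ (ENNReal.ofReal p) (ENNReal.ofReal q) (testSeq n s τ p) ≤ C := by
  have hq : 0 < q := hp.trans hpq
  set c : ℝ := n * τ * p with hc
  have hn' : (0:ℝ) < n := by exact_mod_cast hn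
  have hcpos : 0 < c := mul_pos (mul_pos hn' hτ) hp
  set r : ℝ≥0∞ := (2:ℝ≥0∞) ^ (-c) with hrdef
  have hr1 : r < 1 := ENNReal.rpow_lt_one_of_one_lt_of_neg one_lt_two (neg_lt_zero.2 hcpos)
  have h1r : (1 - r) ≠ 0 := by
    simp only [ne_eq, tsub_eq_zero_iff_le, not_le]; exact hr1
  set C : ℝ≥0∞ := ((1 - r)⁻¹) ^ (1/p) with hCdef
  have hCne : C ≠ ∞ :=
    ENNReal.rpow_ne_top_of_nonneg (by positivity) (ENNReal.inv_ne_top.mpr h1r)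
  -- geometric sum computation
  have hS : ∀ P : DyadicCube n,
      (∑' j : {j : ℤ // P.j ≤ j},
        (Rcube n j.1).vol ^ ((τ - 1 / p) * p) * (Rcube n j.1).vol)
      = P.vol ^ (τ * p) * (1 - r)⁻¹ := by
    intro P
    have hterm : ∀ j : {j : ℤ // P.j ≤ j},
        (Rcube n j.1).vol ^ ((τ - 1 / p) * p) * (Rcube n j.1).vol
          = (2:ℝ≥0∞) ^ (-(j.1 : ℝ) * c) := by
      intro j
      calc (Rcube n j.1).vol ^ ((τ - 1 / p) * p) * (Rcube n j.1).vol
          = (Rcube n j.1).vol ^ ((τ - 1 / p) * p + 1) := by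
            rw [← vol_rpow_add, ENNReal.rpow_one]
        _ = (2:ℝ≥0∞) ^ (-(j.1 : ℝ) * c) := by
            rw [show (Rcube n j.1).vol = (2:ℝ≥0∞) ^ (-(j.1:ℝ) * (n:ℝ)) from rfl,
              ← ENNReal.rpow_mul]
            congr 1
            field_simp
            ring
    rw [tsum_congr hterm, geom_sum P.j hcpos,
      show P.vol = (2:ℝ≥0∞) ^ (-(P.j:ℝ) * (n:ℝ)) from rfl, ← ENNReal.rpow_mul]
    congr 2
    ring
  -- bound for the middle quantity
  have hmid : ∀ P : DyadicCube n,
      P.vol ^ (-τ) * (P.vol ^ (τ * p) * (1 - r)⁻¹) ^ (1/p) ≤ C := by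
    intro P
    rw [ENNReal.mul_rpow_of_nonneg _ _ (by positivity), ← ENNReal.rpow_mul,
      show τ * p * (1/p) = τ by field_simp, ← mul_assoc, vol_rpow_add,
      neg_add_cancel, ENNReal.rpow_zero, one_mul]
  -- the key integral estimate
  have key : ∀ P : DyadicCube n,
      (lpIntOn (ENNReal.ofReal p) P.toSet fun x =>
        lqSum (ENNReal.ofReal q)
          fun Q : {Q : DyadicCube n // Q.toSet ⊆ P.toSet} =>
            coeff s Q.1 * ‖testSeq n s τ p Q.1‖₊ * ind Q.1 x)
      ≤ (∑' j : {j : ℤ // P.j ≤ j},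
          (Rcube n j.1).vol ^ ((τ - 1 / p) * p) * (Rcube n j.1).vol) ^ (1/p) := by
    intro P
    rw [lpIntOn, if_neg ENNReal.ofReal_ne_top, ENNReal.toReal_ofReal hp.le]
    refine ENNReal.rpow_le_rpow ?_ (by positivity)
    -- pointwise bound
    have hpt : ∀ x, (lqSum (ENNReal.ofReal q)
        fun Q : {Q : DyadicCube n // Q.toSet ⊆ P.toSet} =>
          coeff s Q.1 * ‖testSeq n s τ p Q.1‖₊ * ind Q.1 x) ^ p
        ≤ ∑' Q : {Q : DyadicCube n // Q.toSet ⊆ P.toSet},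
            Q.1.toSet.indicator
              (fun _ => (coeff s Q.1 * ‖testSeq n s τ p Q.1‖₊) ^ p) x := by
      intro x
      rw [lqSum, if_neg ENNReal.ofReal_ne_top, ENNReal.toReal_ofReal hq.le,
        ← ENNReal.rpow_mul, show 1 / q * p = p / q by ring]
      refine le_trans (tsum_rpow_le _ (div_pos hp hq) ((div_le_one hq).2 hpq.le)) ?_
      refine le_of_eq (tsum_congr fun Q => ?_)
      rw [← ENNReal.rpow_mul, show q * (p / q) = p by field_simp]
      by_cases hx : x ∈ Q.1.toSet
      · rw [ind, Set.indicator_of_mem hx, Set.indicator_of_mem hx, mul_one]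
      · rw [ind, Set.indicator_of_notMem hx, Set.indicator_of_notMem hx, mul_zero,
          ENNReal.zero_rpow_of_pos hp]
    calc (∫⁻ x in P.toSet, (lqSum (ENNReal.ofReal q)
          fun Q : {Q : DyadicCube n // Q.toSet ⊆ P.toSet} =>
            coeff s Q.1 * ‖testSeq n s τ p Q.1‖₊ * ind Q.1 x) ^ p)
        ≤ ∫⁻ x in P.toSet, ∑' Q : {Q : DyadicCube n // Q.toSet ⊆ P.toSet},
            Q.1.toSet.indicator
              (fun _ => (coeff s Q.1 * ‖testSeq n s τ p Q.1‖₊) ^ p) x :=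
          lintegral_mono hpt
      _ = ∑' Q : {Q : DyadicCube n // Q.toSet ⊆ P.toSet},
            ∫⁻ x in P.toSet, Q.1.toSet.indicator
              (fun _ => (coeff s Q.1 * ‖testSeq n s τ p Q.1‖₊) ^ p) x :=
          lintegral_tsum fun Q =>
            ((measurable_const.indicator (measurableSet_toSet Q.1)).aemeasurable)
      _ = ∑' Q : {Q : DyadicCube n // Q.toSet ⊆ P.toSet},
            (coeff s Q.1 * ‖testSeq n s τ p Q.1‖₊) ^ p * Q.1.vol := by
          refine tsum_congr fun Q => ?_
          rw [lintegral_indicator_const (measurableSet_toSet Q.1),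
            Measure.restrict_apply (measurableSet_toSet Q.1),
            Set.inter_eq_self_of_subset_left Q.2, volume_toSet]
      _ ≤ ∑' j : {j : ℤ // P.j ≤ j},
            (Rcube n j.1).vol ^ ((τ - 1 / p) * p) * (Rcube n j.1).vol := by
          by_cases hPk : P.k = 0
          · refine le_of_eq ?_
            have hRk : ∀ m : ℤ, (Rcube n m).k = 0 := fun m => rfl
            set f : {Q : DyadicCube n // Q.toSet ⊆ P.toSet} → ℝ≥0∞ :=
              fun Q => (coeff s Q.1 * ‖testSeq n s τ p Q.1‖₊) ^ p * Q.1.vol with hf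
            set i : {j : ℤ // P.j ≤ j} → {Q : DyadicCube n // Q.toSet ⊆ P.toSet} :=
              fun j => ⟨Rcube n j.1, Rsub (hRk j.1) hPk j.2⟩ with hi
            have hinj : Function.Injective i := by
              intro a b hab
              apply Subtype.ext
              have := congrArg (fun x => x.1.j) hab
              exact this
            have hsupp : Function.support f ⊆ Set.range i := by
              rintro ⟨Q, hQ⟩ hne
              have hk : Q.k = 0 := by
                by_contra hk
                apply hne
                simp only [hf, zero_norm s τ p Q hk, mul_zero,
                  ENNReal.zero_rpow_of_pos hp, zero_mul]
              have hj : P.j ≤ Q.j := j_le_of_subset hn hQ hk hPk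
              refine ⟨⟨Q.j, hj⟩, ?_⟩
              apply Subtype.ext
              show Rcube n Q.j = Q
              cases Q with
              | mk j k => simp only at hk ⊢; rw [Rcube, hk]
            have := hinj.tsum_eq hsupp
            rw [← this]
            refine tsum_congr fun j => ?_
            show (coeff s (Rcube n j.1) * ‖testSeq n s τ p (Rcube n j.1)‖₊) ^ p
                * (Rcube n j.1).vol
              = (Rcube n j.1).vol ^ ((τ - 1 / p) * p) * (Rcube n j.1).vol
            rw [coeff_mul_norm s τ p (Rcube n j.1) (hRk j.1), ← ENNReal.rpow_mul]
          · have hz : ∀ Q : {Q : DyadicCube n // Q.toSet ⊆ P.toSet},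
                (coeff s Q.1 * ‖testSeq n s τ p Q.1‖₊) ^ p * Q.1.vol = 0 := by
              intro Q
              by_cases hk : Q.1.k = 0
              · exact absurd (k_eq_zero_of_zero_mem (Q.2 (zero_mem_toSet hk))) hPk
              · rw [zero_norm s τ p Q.1 hk, mul_zero, ENNReal.zero_rpow_of_pos hp,
                  zero_mul]
            rw [tsum_congr hz, tsum_zero]
            exact zero_le
  refine ⟨C, hCne, fun P => ⟨mul_le_mul_right (key P) _, ?_⟩, ?_⟩
  · rw [hS P]; exact hmid P
  · rw [fNorm]
    exact iSup_le fun P =>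
      le_trans (mul_le_mul_right (key P) _) (by rw [hS P]; exact hmid P)
end

section
/- Let s ∈ ℝ and r ∈ ℝ, q ∈ (0,∞), with r > 1 (or q = ∞ and r ≥ 1). Define the generalized Carleson measure sequence norm ‖t‖_{cmo^{s,q}_r} = sup_{P dyadic} ( |P|^{-r} ∫_P Σ_{Q⊂P} [ |Q|^{-s/n-1/2} |t_Q| χ_Q(x) ]^q dx )^{1/q}. Then ‖t‖_{cmo^{s,q}_r} is equivalent to sup_{Q dyadic} |Q|^{-s/n-(r-1)/q-1/2} |t_Q|, i.e., cmo^{s,q}_r coincides with the Triebel-Lizorkin sequence space ḟ^{s+n(r-1)/q}_{∞,∞} with equivalent norms. -/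
open MeasureTheory ENNReal

open DyadicCube

/-- The generalized Carleson measure sequence norm
`‖t‖_{cmo^{s,q}_r} = sup_P ( |P|^{-r} ∫_P Σ_{Q⊆P} [ |Q|^{-s/n-1/2} |t_Q| χ_Q(x) ]^q dx )^{1/q}`,
with the usual modification (suprema over `x ∈ P` and over `Q ⊆ P`) when `q = ∞`. -/
noncomputable def cmoNorm (n : ℕ) (s : ℝ) (q : ℝ≥0∞) (r : ℝ)
    (t : DyadicCube n → ℂ) : ℝ≥0∞ :=
  if q = ∞ then
    ⨆ P : DyadicCube n, ⨆ x ∈ P.toSet,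
      ⨆ Q : {Q : DyadicCube n // Q.toSet ⊆ P.toSet},
        coeff s Q.1 * ‖t Q.1‖₊ * ind Q.1 x
  else
    ⨆ P : DyadicCube n,
      (P.vol ^ (-r) *
        ∫⁻ x in P.toSet,
          ∑' Q : {Q : DyadicCube n // Q.toSet ⊆ P.toSet},
            (coeff s Q.1 * ‖t Q.1‖₊ * ind Q.1 x) ^ q.toReal) ^ (1 / q.toReal)

namespace StmtAux

open DyadicCube

variable {n : ℕ}

lemma two_rpow_ne_zero (y : ℝ) : (2:ℝ≥0∞) ^ y ≠ 0 :=
  (ENNReal.rpow_pos (by norm_num) (by norm_num)).ne'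

lemma two_rpow_ne_top (y : ℝ) : (2:ℝ≥0∞) ^ y ≠ ⊤ := by
  simp [ENNReal.rpow_eq_top_iff]

lemma vol_ne_zero (Q : DyadicCube n) : Q.vol ≠ 0 := two_rpow_ne_zero _

lemma vol_ne_top (Q : DyadicCube n) : Q.vol ≠ ⊤ := two_rpow_ne_top _

lemma vol_rpow (Q : DyadicCube n) (y : ℝ) :
    Q.vol ^ y = (2:ℝ≥0∞) ^ (-(Q.j:ℝ) * ↑n * y) := by
  rw [DyadicCube.vol, ← ENNReal.rpow_mul]

lemma vol_rpow_add (Q : DyadicCube n) (y z : ℝ) :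
    Q.vol ^ (y + z) = Q.vol ^ y * Q.vol ^ z :=
  ENNReal.rpow_add y z (vol_ne_zero Q) (vol_ne_top Q)

lemma toSet_eq (Q : DyadicCube n) :
    Q.toSet = Set.pi Set.univ
      (fun i => Set.Ico ((Q.k i : ℝ) * (2:ℝ)^(-Q.j)) (((Q.k i : ℝ)+1) * (2:ℝ)^(-Q.j))) := by
  ext x
  simp [DyadicCube.toSet, Set.mem_pi]

lemma measurableSet_toSet (Q : DyadicCube n) : MeasurableSet Q.toSet := by
  rw [toSet_eq]
  exact MeasurableSet.univ_pi (fun i => measurableSet_Ico)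

lemma volume_toSet (Q : DyadicCube n) : volume Q.toSet = Q.vol := by
  rw [toSet_eq, volume_pi_pi]
  have h1 : ∀ i : Fin n,
      volume (Set.Ico ((Q.k i : ℝ) * (2:ℝ)^(-Q.j)) (((Q.k i : ℝ)+1) * (2:ℝ)^(-Q.j)))
        = ENNReal.ofReal ((2:ℝ)^(-Q.j)) := by
    intro i
    rw [Real.volume_Ico]
    congr 1
    ring
  simp only [h1, Finset.prod_const, Finset.card_univ, Fintype.card_fin]
  rw [DyadicCube.vol, ENNReal.rpow_mul, ENNReal.rpow_natCast]
  congr 1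
  rw [show ((2:ℝ)^(-Q.j)) = (2:ℝ) ^ ((-Q.j : ℤ) : ℝ) from (Real.rpow_intCast 2 (-Q.j)).symm,
    ← ENNReal.ofReal_rpow_of_pos (by norm_num : (0:ℝ) < 2)]
  rw [show ((-Q.j : ℤ) : ℝ) = -(Q.j : ℝ) by push_cast; ring]
  norm_num

lemma zpow_pos' (j : ℤ) : (0:ℝ) < (2:ℝ)^j := zpow_pos (by norm_num) j

lemma corner_mem (Q : DyadicCube n) :
    (fun i => (Q.k i : ℝ) * (2:ℝ)^(-Q.j)) ∈ Q.toSet := by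
  intro i
  refine ⟨le_rfl, ?_⟩
  show (Q.k i : ℝ) * (2:ℝ)^(-Q.j) < ((Q.k i : ℝ) + 1) * (2:ℝ)^(-Q.j)
  have := zpow_pos' (-Q.j)
  nlinarith

lemma mem_toSet_iff {Q : DyadicCube n} {x : Fin n → ℝ} :
    x ∈ Q.toSet ↔ ∀ i, (Q.k i : ℝ) * (2:ℝ)^(-Q.j) ≤ x i ∧
      x i < ((Q.k i : ℝ) + 1) * (2:ℝ)^(-Q.j) := Iff.rfl

lemma eq_of_j_eq {Q Q' : DyadicCube n} (hj : Q.j = Q'.j) {x : Fin n → ℝ}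
    (h1 : x ∈ Q.toSet) (h2 : x ∈ Q'.toSet) : Q = Q' := by
  obtain ⟨j, k⟩ := Q
  obtain ⟨j', k'⟩ := Q'
  simp only at hj
  subst hj
  simp only [DyadicCube.mk.injEq, true_and]
  funext i
  have w := zpow_pos' (-j)
  have a1 := h1 i
  have a2 := h2 i
  simp only at a1 a2
  have hk1 : (k i : ℝ) < (k' i : ℝ) + 1 := by
    have := lt_of_le_of_lt a1.1 a2.2
    exact (mul_lt_mul_iff_of_pos_right w).mp this
  have hk2 : (k' i : ℝ) < (k i : ℝ) + 1 := by
    have := lt_of_le_of_lt a2.1 a1.2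
    exact (mul_lt_mul_iff_of_pos_right w).mp this
  have : (k i) < (k' i) + 1 := by exact_mod_cast hk1
  have : (k' i) < (k i) + 1 := by exact_mod_cast hk2
  omega

lemma j_le_of_subset (hn : 0 < n) {Q P : DyadicCube n} (h : Q.toSet ⊆ P.toSet) :
    P.j ≤ Q.j := by
  have hwQ := zpow_pos' (-Q.j)
  have hwP := zpow_pos' (-P.j)
  set wQ := (2:ℝ)^(-Q.j) with hwQdef
  set wP := (2:ℝ)^(-P.j) with hwPdef
  let i0 : Fin n := ⟨0, hn⟩
  have hm : (fun i => (Q.k i : ℝ) * wQ + wQ/2) ∈ Q.toSet := by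
    intro i
    constructor
    · linarith
    · nlinarith
  have hc := h (corner_mem Q) i0
  have hm' := h hm i0
  have key : wQ / 2 < wP := by nlinarith [hc.1, hm'.2]
  have h2 : (2:ℝ)^(-Q.j - 1) < (2:ℝ)^(-P.j) := by
    rw [zpow_sub₀ (by norm_num : (2:ℝ) ≠ 0), zpow_one]
    linarith
  have := (zpow_lt_zpow_iff_right₀ (by norm_num : (1:ℝ) < 2)).mp h2
  omega

lemma ind_of_mem {Q : DyadicCube n} {x : Fin n → ℝ} (hx : x ∈ Q.toSet) :
    Q.ind x = 1 := Set.indicator_of_mem hx _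

lemma ind_of_not_mem {Q : DyadicCube n} {x : Fin n → ℝ} (hx : x ∉ Q.toSet) :
    Q.ind x = 0 := Set.indicator_of_notMem hx _

lemma ind_le_one (Q : DyadicCube n) (x : Fin n → ℝ) : Q.ind x ≤ 1 := by
  by_cases hx : x ∈ Q.toSet
  · rw [ind_of_mem hx]
  · rw [ind_of_not_mem hx]; exact zero_le

lemma mem_of_ind_ne_zero {Q : DyadicCube n} {x : Fin n → ℝ} (h : Q.ind x ≠ 0) :
    x ∈ Q.toSet := by
  by_contra hx
  exact h (ind_of_not_mem hx)

lemma tsum_le_of_subsingleton {ι : Type*} (f : ι → ℝ≥0∞) (c : ℝ≥0∞)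
    (h1 : ∀ i, f i ≤ c) (h2 : ∀ i i', f i ≠ 0 → f i' ≠ 0 → i = i') :
    ∑' i, f i ≤ c := by
  by_cases hex : ∃ i, f i ≠ 0
  · obtain ⟨i0, hi0⟩ := hex
    rw [tsum_eq_single i0 (fun b hb => by_contra fun hb0 => hb (h2 b i0 hb0 hi0))]
    exact h1 i0
  · push_neg at hex
    rw [ENNReal.tsum_eq_zero.mpr hex]
    exact zero_le

/-- Enumeration of the integers `≥ J` by `ℕ`. -/
def natEquiv (J : ℤ) : ℕ ≃ {j : ℤ // J ≤ j} where
  toFun m := ⟨J + m, by omega⟩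
  invFun j := (j.1 - J).toNat
  left_inv m := by simp
  right_inv j := by
    obtain ⟨j, hj⟩ := j
    apply Subtype.ext
    show J + (((j - J).toNat : ℤ)) = j
    omega

lemma tsum_geom (J : ℤ) (b : ℝ) :
    ∑' j : {j : ℤ // J ≤ j}, (2:ℝ≥0∞) ^ (-(j.1:ℝ) * b) =
      (2:ℝ≥0∞) ^ (-(J:ℝ) * b) * (1 - (2:ℝ≥0∞) ^ (-b))⁻¹ := by
  rw [← Equiv.tsum_eq (natEquiv J) (fun j => (2:ℝ≥0∞) ^ (-(j.1:ℝ) * b))]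
  have key : ∀ m : ℕ, (2:ℝ≥0∞) ^ (-(((natEquiv J m).1 : ℤ):ℝ) * b)
      = (2:ℝ≥0∞) ^ (-(J:ℝ)*b) * ((2:ℝ≥0∞)^(-b))^m := by
    intro m
    have h1 : (((natEquiv J m).1 : ℤ) : ℝ) = (J:ℝ) + m := by
      simp [natEquiv]
    rw [h1, ← ENNReal.rpow_natCast ((2:ℝ≥0∞)^(-b)) m, ← ENNReal.rpow_mul,
      ← ENNReal.rpow_add _ _ (by norm_num) (by norm_num)]
    congr 1
    ring
  rw [tsum_congr key, ENNReal.tsum_mul_left, ENNReal.tsum_geometric]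

lemma vol_rpow_shift {P Q : DyadicCube n} (m : ℕ) (hQ : Q.j = P.j + m) (y : ℝ) :
    Q.vol ^ y = P.vol ^ y * ((2:ℝ≥0∞) ^ (-((n:ℝ) * y))) ^ m := by
  rw [vol_rpow, vol_rpow, ← ENNReal.rpow_natCast ((2:ℝ≥0∞)^(-((n:ℝ)*y))) m,
    ← ENNReal.rpow_mul, ← ENNReal.rpow_add _ _ (by norm_num) (by norm_num), hQ]
  congr 1
  push_cast
  ring

end StmtAux
/-- for `s ∈ ℝ` and either `q ∈ (0,∞)` with `r > 1`, or `q = ∞` with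
`r ≥ 1`, the norm `‖t‖_{cmo^{s,q}_r}` is equivalent to
`sup_Q |Q|^{-s/n-(r-1)/q-1/2} |t_Q|`; that is, `cmo^{s,q}_r = ḟ^{s+n(r-1)/q}_{∞,∞}`
with equivalent norms. -/
theorem stmt13 (n : ℕ) (hn : 0 < n) (s r : ℝ) (q : ℝ≥0∞)
    (h : (q ≠ ∞ ∧ 0 < q ∧ 1 < r) ∨ (q = ∞ ∧ 1 ≤ r)) :
    ∃ c C : ℝ≥0∞, 0 < c ∧ C ≠ ∞ ∧ ∀ t : DyadicCube n → ℂ,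
      c * supNorm n (s + n * (r - 1) / q.toReal) t ≤ cmoNorm n s q r t ∧
      cmoNorm n s q r t ≤ C * supNorm n (s + n * (r - 1) / q.toReal) t := by
  rcases h with ⟨hqt, hq0, hr⟩ | ⟨hq, hr⟩
  · -- case q ≠ ∞, 0 < q, 1 < r
    set a := q.toReal with ha_def
    have ha : 0 < a := ENNReal.toReal_pos hq0.ne' hqt
    have ha' : a ≠ 0 := ha.ne'
    have hn' : (n:ℝ) ≠ 0 := Nat.cast_ne_zero.mpr hn.ne'
    have hainv : (0:ℝ) ≤ 1/a := one_div_nonneg.mpr ha.le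
    have hnr : 0 < (n:ℝ) * (r-1) := mul_pos (Nat.cast_pos.mpr hn) (by linarith)
    set x₀ := (2:ℝ≥0∞) ^ (-((n:ℝ) * (r-1))) with hx₀
    have hx₀lt : x₀ < 1 :=
      ENNReal.rpow_lt_one_of_one_lt_of_neg (by norm_num) (by linarith)
    set C₀ := (1 - x₀)⁻¹ with hC₀
    have hC₀top : C₀ ≠ ⊤ := by
      rw [hC₀, Ne, ENNReal.inv_eq_top]
      intro h0
      rw [tsub_eq_zero_iff_le] at h0
      exact absurd h0 (not_le.mpr hx₀lt)
    have hcs : ∀ Q : DyadicCube n,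
        coeff s Q = coeff (s + ↑n*(r-1)/a) Q * Q.vol ^ ((r-1)/a) := fun Q => by
      unfold coeff
      rw [← StmtAux.vol_rpow_add]
      congr 1
      field_simp
      ring
    have hcs2 : ∀ Q : DyadicCube n,
        coeff (s + ↑n*(r-1)/a) Q = coeff s Q * Q.vol ^ ((1-r)/a) := fun Q => by
      unfold coeff
      rw [← StmtAux.vol_rpow_add]
      congr 1
      field_simp
      ring
    refine ⟨1, C₀ ^ (1/a), one_pos,
      ENNReal.rpow_ne_top_of_nonneg hainv hC₀top, fun t => ⟨?_, ?_⟩⟩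
    · -- lower bound : supNorm ≤ cmoNorm
      rw [one_mul]
      simp only [supNorm]
      refine iSup_le fun Q => ?_
      simp only [cmoNorm, if_neg hqt, ← ha_def]
      refine le_iSup_of_le Q ?_
      have hint : ((coeff s Q * ‖t Q‖₊) ^ a * Q.vol : ℝ≥0∞) ≤
          ∫⁻ x in Q.toSet,
            ∑' Q' : {Q' : DyadicCube n // Q'.toSet ⊆ Q.toSet},
              (coeff s Q'.1 * ‖t Q'.1‖₊ * Q'.1.ind x) ^ a := by
        calc ((coeff s Q * ‖t Q‖₊) ^ a * Q.vol : ℝ≥0∞)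
            = ∫⁻ _x in Q.toSet, (coeff s Q * ‖t Q‖₊) ^ a := by
              rw [setLIntegral_const, StmtAux.volume_toSet]
          _ ≤ _ := by
              refine setLIntegral_mono' (StmtAux.measurableSet_toSet Q) fun x hx => ?_
              have h1 : ((coeff s Q * ‖t Q‖₊ : ℝ≥0∞)) ^ a
                  = (coeff s Q * ‖t Q‖₊ * Q.ind x) ^ a := by
                rw [StmtAux.ind_of_mem hx, mul_one]
              rw [h1]
              exact ENNReal.le_tsum (⟨Q, subset_rfl⟩ : {Q' : DyadicCube n // Q'.toSet ⊆ Q.toSet})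
      have heq : (coeff (s + ↑n*(r-1)/a) Q * ‖t Q‖₊ : ℝ≥0∞)
          = (Q.vol ^ (-r) * ((coeff s Q * ‖t Q‖₊) ^ a * Q.vol)) ^ (1/a) := by
        have e1 : Q.vol ^ (-r) * ((coeff s Q * (‖t Q‖₊:ℝ≥0∞)) ^ a * Q.vol)
            = (coeff s Q * ‖t Q‖₊)^a * Q.vol ^ (1-r) := by
          have e2 : Q.vol ^ ((1:ℝ)-r) = Q.vol ^ (-r) * Q.vol := by
            rw [show (1:ℝ)-r = -r + 1 by ring, StmtAux.vol_rpow_add, ENNReal.rpow_one]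
          rw [e2]; ring
        rw [e1, ENNReal.mul_rpow_of_nonneg _ _ hainv, ← ENNReal.rpow_mul,
          ← ENNReal.rpow_mul, mul_one_div_cancel ha', ENNReal.rpow_one, hcs2 Q,
          show ((1:ℝ)-r) * (1/a) = (1-r)/a by ring]
        ring
      rw [heq]
      exact ENNReal.rpow_le_rpow (mul_le_mul_right hint _) hainv
    · -- upper bound : cmoNorm ≤ C * supNorm
      simp only [cmoNorm, if_neg hqt, ← ha_def]
      refine iSup_le fun P => ?_
      set M := supNorm n (s + ↑n*(r-1)/a) t with hM
      have hMle : ∀ Q : DyadicCube n, (coeff (s + ↑n*(r-1)/a) Q * ‖t Q‖₊ : ℝ≥0∞) ≤ M :=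
        fun Q => le_iSup (fun Q => (coeff (s + ↑n*(r-1)/a) Q * ‖t Q‖₊ : ℝ≥0∞)) Q
      have hpt : ∀ x : Fin n → ℝ,
          (∑' Q' : {Q' : DyadicCube n // Q'.toSet ⊆ P.toSet},
            (coeff s Q'.1 * ‖t Q'.1‖₊ * Q'.1.ind x) ^ a) ≤ M ^ a * (P.vol ^ (r-1) * C₀) := by
        intro x
        have step1 : ∀ Q' : {Q' : DyadicCube n // Q'.toSet ⊆ P.toSet},
            (coeff s Q'.1 * ‖t Q'.1‖₊ * Q'.1.ind x) ^ a
              ≤ M ^ a * (Q'.1.vol ^ (r-1) * Q'.1.ind x) := by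
          intro Q'
          by_cases hx : x ∈ Q'.1.toSet
          · rw [StmtAux.ind_of_mem hx, mul_one, mul_one, hcs Q'.1,
              mul_right_comm, ENNReal.mul_rpow_of_nonneg _ _ ha.le,
              ← ENNReal.rpow_mul, div_mul_cancel₀ _ ha']
            exact mul_le_mul_left (ENNReal.rpow_le_rpow (hMle Q'.1) ha.le) _
          · rw [StmtAux.ind_of_not_mem hx, mul_zero, mul_zero,
              ENNReal.zero_rpow_of_pos ha]
            exact zero_le
        have hsum : (∑' Q' : {Q' : DyadicCube n // Q'.toSet ⊆ P.toSet},
            Q'.1.vol ^ (r-1) * Q'.1.ind x) ≤ P.vol ^ (r-1) * C₀ := by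
          let e : {Q' : DyadicCube n // Q'.toSet ⊆ P.toSet} → ℕ :=
            fun Q' => (Q'.1.j - P.j).toNat
          rw [← Equiv.tsum_eq (Equiv.sigmaFiberEquiv e)
            (fun Q' : {Q' : DyadicCube n // Q'.toSet ⊆ P.toSet} =>
              Q'.1.vol ^ (r-1) * Q'.1.ind x), ENNReal.tsum_sigma']
          have fib : ∀ m : ℕ,
              (∑' b : {Q' : {Q' : DyadicCube n // Q'.toSet ⊆ P.toSet} // e Q' = m},
                (b.1).1.vol ^ (r-1) * (b.1).1.ind x) ≤ P.vol ^ (r-1) * x₀^m := by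
            intro m
            apply StmtAux.tsum_le_of_subsingleton
            · intro b
              by_cases hx : x ∈ b.1.1.toSet
              · rw [StmtAux.ind_of_mem hx, mul_one]
                have h1 := StmtAux.j_le_of_subset hn b.1.2
                have h2 : (b.1.1.j - P.j).toNat = m := b.2
                have hj : b.1.1.j = P.j + m := by omega
                rw [StmtAux.vol_rpow_shift m hj (r-1), hx₀]
              · rw [StmtAux.ind_of_not_mem hx, mul_zero]
                exact zero_le
            · intro b b' h1 h2
              have hx1 : x ∈ b.1.1.toSet :=
                StmtAux.mem_of_ind_ne_zero fun h => h1 (by rw [h, mul_zero])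
              have hx2 : x ∈ b'.1.1.toSet :=
                StmtAux.mem_of_ind_ne_zero fun h => h2 (by rw [h, mul_zero])
              have e1 : (b.1.1.j - P.j).toNat = m := b.2
              have e2 : (b'.1.1.j - P.j).toNat = m := b'.2
              have l1 := StmtAux.j_le_of_subset hn b.1.2
              have l2 := StmtAux.j_le_of_subset hn b'.1.2
              have hj : b.1.1.j = b'.1.1.j := by omega
              exact Subtype.ext (Subtype.ext (StmtAux.eq_of_j_eq hj hx1 hx2))
          refine le_trans (ENNReal.tsum_le_tsum fib) ?_
          rw [ENNReal.tsum_mul_left, ENNReal.tsum_geometric, hC₀]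
        calc (∑' Q' : {Q' : DyadicCube n // Q'.toSet ⊆ P.toSet},
              (coeff s Q'.1 * ‖t Q'.1‖₊ * Q'.1.ind x) ^ a)
            ≤ ∑' Q' : {Q' : DyadicCube n // Q'.toSet ⊆ P.toSet},
              M ^ a * (Q'.1.vol ^ (r-1) * Q'.1.ind x) := ENNReal.tsum_le_tsum step1
          _ = M ^ a * ∑' Q' : {Q' : DyadicCube n // Q'.toSet ⊆ P.toSet},
              Q'.1.vol ^ (r-1) * Q'.1.ind x := ENNReal.tsum_mul_left
          _ ≤ M ^ a * (P.vol ^ (r-1) * C₀) := mul_le_mul_right hsum _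
      have hint : (∫⁻ x in P.toSet,
          ∑' Q' : {Q' : DyadicCube n // Q'.toSet ⊆ P.toSet},
            (coeff s Q'.1 * ‖t Q'.1‖₊ * Q'.1.ind x) ^ a)
          ≤ M ^ a * (P.vol ^ (r-1) * C₀) * P.vol := by
        calc (∫⁻ x in P.toSet,
            ∑' Q' : {Q' : DyadicCube n // Q'.toSet ⊆ P.toSet},
              (coeff s Q'.1 * ‖t Q'.1‖₊ * Q'.1.ind x) ^ a)
            ≤ ∫⁻ _x in P.toSet, M ^ a * (P.vol ^ (r-1) * C₀) :=
              lintegral_mono fun x => hpt x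
          _ = M ^ a * (P.vol ^ (r-1) * C₀) * P.vol := by
              rw [setLIntegral_const, StmtAux.volume_toSet]
      refine le_trans (ENNReal.rpow_le_rpow (mul_le_mul_right hint _) hainv) ?_
      have hcollapse : P.vol ^ (-r) * (M ^ a * (P.vol ^ (r-1) * C₀) * P.vol)
          = M ^ a * C₀ := by
        have h1 : P.vol ^ (-r) * (P.vol ^ (r-1) * P.vol) = 1 := by
          have hx : P.vol ^ (-r) * P.vol ^ (r - 1) = P.vol ^ (-1:ℝ) := by
            rw [← StmtAux.vol_rpow_add]
            congr 1
            ring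
          calc P.vol ^ (-r) * (P.vol ^ (r-1) * P.vol)
              = (P.vol ^ (-r) * P.vol ^ (r-1)) * P.vol := by ring
            _ = P.vol ^ (-1:ℝ) * P.vol := by rw [hx]
            _ = 1 := by
                rw [ENNReal.rpow_neg_one]
                exact ENNReal.inv_mul_cancel (StmtAux.vol_ne_zero P) (StmtAux.vol_ne_top P)
        calc P.vol ^ (-r) * (M ^ a * (P.vol ^ (r-1) * C₀) * P.vol)
            = M ^ a * C₀ * (P.vol ^ (-r) * (P.vol ^ (r-1) * P.vol)) := by ring
          _ = M ^ a * C₀ := by rw [h1, mul_one]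
      rw [hcollapse, ENNReal.mul_rpow_of_nonneg _ _ hainv, ← ENNReal.rpow_mul,
        mul_one_div_cancel ha', ENNReal.rpow_one, mul_comm]
  · -- case q = ∞
    subst hq
    refine ⟨1, 1, one_pos, one_ne_top, fun t => ?_⟩
    have hs : s + ↑n * (r - 1) / (⊤:ℝ≥0∞).toReal = s := by simp
    rw [hs, one_mul]
    have key : cmoNorm n s ⊤ r t = supNorm n s t := by
      simp only [cmoNorm, if_pos rfl]
      apply le_antisymm
      · refine iSup_le fun P => iSup_le fun x => iSup_le fun hx => iSup_le fun Q => ?_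
        calc (coeff s Q.1 * ‖t Q.1‖₊ * Q.1.ind x : ℝ≥0∞)
            ≤ coeff s Q.1 * ‖t Q.1‖₊ * 1 :=
              mul_le_mul_right (StmtAux.ind_le_one _ _) _
          _ = coeff s Q.1 * ‖t Q.1‖₊ := mul_one _
          _ ≤ supNorm n s t := le_iSup (fun Q => (coeff s Q * ‖t Q‖₊ : ℝ≥0∞)) Q.1
      · refine iSup_le fun Q => ?_
        refine le_iSup_of_le Q ?_
        refine le_iSup₂_of_le (fun i => (Q.k i : ℝ) * (2:ℝ)^(-Q.j))
          (StmtAux.corner_mem Q) ?_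
        refine le_iSup_of_le (⟨Q, subset_rfl⟩ : {Q' : DyadicCube n // Q'.toSet ⊆ Q.toSet}) ?_
        rw [StmtAux.ind_of_mem (StmtAux.corner_mem Q), mul_one]
    rw [key]
    exact ⟨le_rfl, le_rfl⟩
end

section
/- Let s ∈ ℝ and p ∈ (0,∞]. Then the Besov-type sequence space ḃ^{s,1/p}_{p,∞}(ℝⁿ) coincides with ḃ^{s}_{∞,∞}(ℝⁿ) with equivalent norms: for every sequence t = {t_Q}, sup_{P dyadic} |P|^{-1/p} sup_{j ≥ j_P} ( ∫_P [ Σ_{Q⊂P, ℓ(Q)=2^{-j}} |Q|^{-s/n-1/2} |t_Q| χ_Q(x) ]^p dx )^{1/p} is comparable (with constants depending only on n, s, p) to sup_{Q dyadic} |Q|^{-s/n-1/2} |t_Q|. -/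
open MeasureTheory ENNReal

open DyadicCube

namespace DyadicCube

variable {n : ℕ}

lemma toSet_eq (Q : DyadicCube n) : Q.toSet = Set.univ.pi (fun i =>
    Set.Ico ((Q.k i : ℝ) * 2 ^ (-Q.j)) (((Q.k i : ℝ) + 1) * 2 ^ (-Q.j))) := by
  ext x; simp [toSet, Set.mem_pi, Set.mem_Ico]

lemma measurableSet_toSet (Q : DyadicCube n) : MeasurableSet Q.toSet := by
  rw [toSet_eq]; exact MeasurableSet.univ_pi fun i => measurableSet_Ico

lemma volume_toSet (Q : DyadicCube n) : volume Q.toSet = Q.vol := by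
  rw [toSet_eq, volume_pi_pi]
  have h1 : ∀ i : Fin n, volume (Set.Ico ((Q.k i : ℝ) * 2 ^ (-Q.j))
      (((Q.k i : ℝ) + 1) * 2 ^ (-Q.j))) = ENNReal.ofReal ((2:ℝ) ^ (-Q.j)) := by
    intro i; rw [Real.volume_Ico]; ring_nf
  simp only [h1, Finset.prod_const, Finset.card_univ, Fintype.card_fin]
  have h2 : ENNReal.ofReal ((2:ℝ) ^ (-Q.j)) = (2 : ℝ≥0∞) ^ (-(Q.j:ℝ)) := by
    rw [← Real.rpow_intCast 2 (-Q.j), ← ENNReal.ofReal_rpow_of_pos two_pos]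
    norm_num
  rw [h2, vol, ← ENNReal.rpow_natCast _ n, ← ENNReal.rpow_mul]

lemma vol_ne_zero (Q : DyadicCube n) : Q.vol ≠ 0 := by
  simp [vol, ENNReal.rpow_eq_zero_iff]

lemma vol_ne_top (Q : DyadicCube n) : Q.vol ≠ ∞ := by
  simp [vol, ENNReal.rpow_eq_top_iff]

lemma corner_mem (Q : DyadicCube n) :
    (fun i => (Q.k i : ℝ) * 2 ^ (-Q.j)) ∈ Q.toSet := by
  intro i
  refine ⟨le_rfl, ?_⟩
  have hc : (0:ℝ) < 2 ^ (-Q.j) := zpow_pos two_pos _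
  have : (Q.k i : ℝ) * 2 ^ (-Q.j) < ((Q.k i : ℝ)+1) * 2 ^ (-Q.j) :=
    mul_lt_mul_of_pos_right (lt_add_one _) hc
  simpa using this

lemma eq_of_mem_toSet {Q Q' : DyadicCube n} (hj : Q.j = Q'.j) {x : Fin n → ℝ}
    (h : x ∈ Q.toSet) (h' : x ∈ Q'.toSet) : Q = Q' := by
  obtain ⟨j, k⟩ := Q; obtain ⟨j', k'⟩ := Q'
  simp only at hj; subst hj
  have hc : (0:ℝ) < 2 ^ (-j) := zpow_pos two_pos _
  congr 1
  funext i
  have key : ∀ m : ℤ, (m:ℝ) * 2 ^ (-j) ≤ x i → x i < ((m:ℝ)+1) * 2 ^ (-j) →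
      m = ⌊x i / 2 ^ (-j)⌋ := by
    intro m hm1 hm2
    symm
    rw [Int.floor_eq_iff]
    exact ⟨(le_div_iff₀ hc).mpr hm1, by rw [div_lt_iff₀ hc]; linarith⟩
  rw [key (k i) (h i).1 (h i).2, key (k' i) (h' i).1 (h' i).2]

end DyadicCube

lemma coeff_ne_top {n : ℕ} (s : ℝ) (Q : DyadicCube n) : coeff s Q ≠ ∞ := by
  simp [coeff, ENNReal.rpow_eq_top_iff, Q.vol_ne_zero, Q.vol_ne_top]


/-- for `s ∈ ℝ` and `p ∈ (0,∞]`, the Besov-type sequence space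
`ḃ^{s,1/p}_{p,∞}` coincides with `ḃ^{s}_{∞,∞}` with equivalent norms: for every
sequence `t`, `‖t‖_{ḃ^{s,1/p}_{p,∞}}` is comparable to `sup_Q |Q|^{-s/n-1/2}|t_Q|`
(with `1/∞ := 0`). -/
theorem stmt14 (n : ℕ) (hn : 0 < n) (s : ℝ) (p : ℝ≥0∞) (hp : 0 < p) :
    ∃ c C : ℝ≥0∞, 0 < c ∧ C ≠ ∞ ∧ ∀ t : DyadicCube n → ℂ,
      c * supNorm n s t ≤ bNorm n s (1 / p.toReal) p ∞ t ∧
      bNorm n s (1 / p.toReal) p ∞ t ≤ C * supNorm n s t := by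
  refine ⟨1, 1, one_pos, one_ne_top, fun t => ?_⟩
  set M := supNorm n s t with hM
  -- pointwise upper bound by disjointness of same-scale cubes
  have hpt : ∀ (P : DyadicCube n) (j : ℤ) (x : Fin n → ℝ),
      (∑' Q : {Q : DyadicCube n // Q.toSet ⊆ P.toSet ∧ Q.j = j},
        coeff s Q.1 * ‖t Q.1‖₊ * ind Q.1 x) ≤ M := by
    intro P j x
    set f : {Q : DyadicCube n // Q.toSet ⊆ P.toSet ∧ Q.j = j} → ℝ≥0∞ :=
      fun Q => coeff s Q.1 * ‖t Q.1‖₊ * ind Q.1 x with hf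
    have hmem : ∀ Q, f Q ≠ 0 → x ∈ Q.1.toSet := by
      intro Q hQ
      by_contra hx
      exact hQ (by simp [hf, DyadicCube.ind, Set.indicator_of_notMem hx])
    by_cases hex : ∃ Q, f Q ≠ 0
    · obtain ⟨Q0, hQ0⟩ := hex
      have hx0 := hmem Q0 hQ0
      rw [tsum_eq_single Q0 ?_]
      · calc f Q0 ≤ coeff s Q0.1 * ‖t Q0.1‖₊ := by
              simp [hf, DyadicCube.ind, Set.indicator_of_mem hx0]
          _ ≤ M := le_iSup (fun Q => coeff s Q * (‖t Q‖₊ : ℝ≥0∞)) Q0.1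
      · intro Q hQ
        by_contra hfQ
        exact hQ (Subtype.ext (DyadicCube.eq_of_mem_toSet
          (Q.2.2.trans Q0.2.2.symm) (hmem Q hfQ) hx0))
    · push_neg at hex
      exact (ENNReal.tsum_eq_zero.mpr hex).le.trans (zero_le : 0 ≤ M)
  -- single term lower bound
  have hlow : ∀ (Q0 : DyadicCube n) (x : Fin n → ℝ), x ∈ Q0.toSet →
      coeff s Q0 * ‖t Q0‖₊ ≤
      ∑' Q : {Q : DyadicCube n // Q.toSet ⊆ Q0.toSet ∧ Q.j = Q0.j},
        coeff s Q.1 * ‖t Q.1‖₊ * ind Q.1 x := by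
    intro Q0 x hx
    have := ENNReal.le_tsum
      (f := fun Q : {Q : DyadicCube n // Q.toSet ⊆ Q0.toSet ∧ Q.j = Q0.j} =>
        coeff s Q.1 * ‖t Q.1‖₊ * ind Q.1 x) ⟨Q0, subset_rfl, rfl⟩
    simpa [DyadicCube.ind, Set.indicator_of_mem hx] using this
  constructor
  · -- lower bound: supNorm ≤ bNorm
    rw [one_mul, hM]
    unfold supNorm
    refine iSup_le fun Q0 => ?_
    have key : coeff s Q0 * ‖t Q0‖₊ ≤ Q0.vol ^ (-(1/p.toReal)) *
        lqSum ∞ (fun j : {j : ℤ // Q0.j ≤ j} =>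
          lpIntOn p Q0.toSet fun x =>
            ∑' Q : {Q : DyadicCube n // Q.toSet ⊆ Q0.toSet ∧ Q.j = j.1},
              coeff s Q.1 * ‖t Q.1‖₊ * ind Q.1 x) := by
      rw [lqSum, if_pos rfl]
      set a := coeff s Q0 * (‖t Q0‖₊ : ℝ≥0∞) with ha
      have hle : a * Q0.vol ^ ((1:ℝ)/p.toReal) ≤ lpIntOn p Q0.toSet (fun x =>
          ∑' Q : {Q : DyadicCube n // Q.toSet ⊆ Q0.toSet ∧ Q.j = Q0.j},
            coeff s Q.1 * ‖t Q.1‖₊ * ind Q.1 x) := by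
        by_cases hptop : p = ∞
        · subst hptop
          rw [lpIntOn, if_pos rfl]
          simp only [ENNReal.toReal_top, _root_.div_zero, ENNReal.rpow_zero, mul_one]
          exact le_trans (hlow Q0 _ Q0.corner_mem)
            (le_iSup₂ (f := fun x (_ : x ∈ Q0.toSet) =>
              ∑' Q : {Q : DyadicCube n // Q.toSet ⊆ Q0.toSet ∧ Q.j = Q0.j},
                coeff s Q.1 * ‖t Q.1‖₊ * ind Q.1 x) _ Q0.corner_mem)
        · have hr : 0 < p.toReal := ENNReal.toReal_pos hp.ne' hptop
          rw [lpIntOn, if_neg hptop]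
          have step1 : a ^ p.toReal * Q0.vol ≤
              ∫⁻ x in Q0.toSet, (∑' Q : {Q : DyadicCube n //
                Q.toSet ⊆ Q0.toSet ∧ Q.j = Q0.j},
                coeff s Q.1 * ‖t Q.1‖₊ * ind Q.1 x) ^ p.toReal := by
            rw [← Q0.volume_toSet, ← setLIntegral_const]
            exact setLIntegral_mono' Q0.measurableSet_toSet fun x hx =>
              ENNReal.rpow_le_rpow (hlow Q0 x hx) hr.le
          calc a * Q0.vol ^ ((1:ℝ)/p.toReal)
              = (a ^ p.toReal * Q0.vol) ^ ((1:ℝ)/p.toReal) := by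
                rw [ENNReal.mul_rpow_of_nonneg _ _ (by positivity),
                  ← ENNReal.rpow_mul, mul_one_div, div_self hr.ne',
                  ENNReal.rpow_one]
            _ ≤ _ := ENNReal.rpow_le_rpow step1 (by positivity)
      refine le_trans ?_ (mul_le_mul_right
        (le_iSup _ (⟨Q0.j, le_rfl⟩ : {j : ℤ // Q0.j ≤ j})) _)
      calc a = Q0.vol ^ (-(1/p.toReal)) * (a * Q0.vol ^ ((1:ℝ)/p.toReal)) := by
            rw [← mul_assoc, mul_comm (Q0.vol ^ (-(1/p.toReal))) a, mul_assoc,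
              ← ENNReal.rpow_add _ _ Q0.vol_ne_zero Q0.vol_ne_top]
            simp
        _ ≤ _ := mul_le_mul_right hle _
    exact key.trans (le_iSup (fun P : DyadicCube n => P.vol ^ (-(1/p.toReal)) *
      lqSum ∞ (fun j : {j : ℤ // P.j ≤ j} =>
        lpIntOn p P.toSet fun x =>
          ∑' Q : {Q : DyadicCube n // Q.toSet ⊆ P.toSet ∧ Q.j = j.1},
            coeff s Q.1 * ‖t Q.1‖₊ * ind Q.1 x)) Q0)
  · -- upper bound: bNorm ≤ supNorm
    rw [one_mul]
    unfold bNorm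
    refine iSup_le fun P => ?_
    rw [lqSum, if_pos rfl, ENNReal.mul_iSup]
    refine iSup_le fun j => ?_
    by_cases hptop : p = ∞
    · subst hptop
      rw [lpIntOn, if_pos rfl]
      simp only [ENNReal.toReal_top, _root_.div_zero, neg_zero, ENNReal.rpow_zero, one_mul]
      exact iSup₂_le fun x _ => hpt P j.1 x
    · have hr : 0 < p.toReal := ENNReal.toReal_pos hp.ne' hptop
      rw [lpIntOn, if_neg hptop]
      have hint : (∫⁻ x in P.toSet, (∑' Q : {Q : DyadicCube n //
          Q.toSet ⊆ P.toSet ∧ Q.j = j.1},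
          coeff s Q.1 * ‖t Q.1‖₊ * ind Q.1 x) ^ p.toReal) ≤ M ^ p.toReal * P.vol := by
        rw [← P.volume_toSet, ← setLIntegral_const]
        exact setLIntegral_mono' P.measurableSet_toSet fun x _ =>
          ENNReal.rpow_le_rpow (hpt P j.1 x) hr.le
      calc P.vol ^ (-(1/p.toReal)) * (∫⁻ x in P.toSet,
            (∑' Q : {Q : DyadicCube n // Q.toSet ⊆ P.toSet ∧ Q.j = j.1},
              coeff s Q.1 * ‖t Q.1‖₊ * ind Q.1 x) ^ p.toReal) ^ ((1:ℝ)/p.toReal)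
          ≤ P.vol ^ (-(1/p.toReal)) * (M ^ p.toReal * P.vol) ^ ((1:ℝ)/p.toReal) :=
            mul_le_mul_right (ENNReal.rpow_le_rpow hint (by positivity)) _
        _ = M := by
            rw [ENNReal.mul_rpow_of_nonneg _ _ (by positivity),
              ← ENNReal.rpow_mul, mul_one_div, div_self hr.ne',
              ENNReal.rpow_one, ← mul_assoc,
              mul_comm (P.vol ^ (-(1/p.toReal))), mul_assoc,
              ← ENNReal.rpow_add _ _ P.vol_ne_zero P.vol_ne_top]
            simp
end
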